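/- There is no compact strictly elliptic conformally constrained minimal torus in ℝ³ in the following sense: there do not exist a lattice Λ = ℤv₁ ⊕ ℤv₂ ⊂ ℝ², a smooth Λ-periodic conformal immersion Φ : ℝ² → ℝ³ with conformal factor e^λ, and constants Q₁, Q₂ ∈ ℝ such that at every point of ℝ² one has H = 4 e^{−4λ}(Q₁ I⁰₁₁ − Q₂ I⁰₁₂) and 4 e^{−2λ} √(Q₁² + Q₂²) < 1. -/

import Mathlib

noncomputable section

open Real MeasureTheory
open scoped ENNReal RealInnerProductSpace

/-- The plane `ℝ²`. -/
abbrev RR2 := ℝ × ℝ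
/-- Euclidean `ℝ³`. -/
abbrev RR3 := EuclideanSpace ℝ (Fin 3)

/-- Partial derivative in the `x₁` direction of an `ℝ³`-valued map on `ℝ²`. -/
def d1 (f : RR2 → RR3) (x : RR2) : RR3 := fderiv ℝ f x (1, 0)
/-- Partial derivative in the `x₂` direction of an `ℝ³`-valued map on `ℝ²`. -/
def d2 (f : RR2 → RR3) (x : RR2) : RR3 := fderiv ℝ f x (0, 1)

/-- Cross product of two vectors of `ℝ³`. -/
def cross3 (a b : RR3) : RR3 := WithLp.toLp 2 (fun i => (crossProduct (fun j => a j) (fun j => b j)) i)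

/-- The Gauss map `n = e^{-2λ} ∂_{x₁}Φ × ∂_{x₂}Φ` of a conformal immersion into `ℝ³`. -/
def gauss (Φ : RR2 → RR3) (lam : RR2 → ℝ) (x : RR2) : RR3 :=
  exp (-(2 * lam x)) • cross3 (d1 Φ x) (d2 Φ x)

/-- Second fundamental form coefficient `I₁₁`. -/
def I11 (Φ : RR2 → RR3) (lam : RR2 → ℝ) (x : RR2) : ℝ := ⟪gauss Φ lam x, d1 (d1 Φ) x⟫
/-- Second fundamental form coefficient `I₁₂`. -/
def I12 (Φ : RR2 → RR3) (lam : RR2 → ℝ) (x : RR2) : ℝ := ⟪gauss Φ lam x, d2 (d1 Φ) x⟫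
/-- Second fundamental form coefficient `I₂₂`. -/
def I22 (Φ : RR2 → RR3) (lam : RR2 → ℝ) (x : RR2) : ℝ := ⟪gauss Φ lam x, d2 (d2 Φ) x⟫

/-- Mean curvature `H = (1/2) e^{-2λ}(I₁₁ + I₂₂)`. -/
def meanCurv (Φ : RR2 → RR3) (lam : RR2 → ℝ) (x : RR2) : ℝ :=
  (1 / 2) * exp (-(2 * lam x)) * (I11 Φ lam x + I22 Φ lam x)

/-- Trace-free Weingarten coefficient `I⁰₁₁ = (I₁₁ - I₂₂)/2`. -/
def I011 (Φ : RR2 → RR3) (lam : RR2 → ℝ) (x : RR2) : ℝ := (I11 Φ lam x - I22 Φ lam x) / 2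
/-- Trace-free Weingarten coefficient `I⁰₁₂ = I₁₂`. -/
def I012 (Φ : RR2 → RR3) (lam : RR2 → ℝ) (x : RR2) : ℝ := I12 Φ lam x

/-! ### Auxiliary lemmas -/

/-- If `g` has a global max at `0`, derivative `g'` everywhere and `g'` has derivative `a`
at `0`, then `a ≤ 0`. -/
lemma secondDeriv_nonpos_of_max {g g' : ℝ → ℝ} {a : ℝ}
    (hg : ∀ t, HasDerivAt g (g' t) t) (hg' : HasDerivAt g' a 0)
    (hmax : ∀ t, g t ≤ g 0) : a ≤ 0 := by
  by_contra h
  push_neg at h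
  have h0 : g' 0 = 0 := by
    have hl : IsLocalMax g 0 := Filter.Eventually.of_forall fun t => hmax t
    have := hl.deriv_eq_zero
    rwa [(hg 0).deriv] at this
  have hslope : Filter.Tendsto (slope g' 0) (nhdsWithin 0 (Set.Ioi 0)) (nhds a) :=
    (hasDerivAt_iff_tendsto_slope.1 hg').mono_left
      (nhdsWithin_mono 0 (fun t ht => ne_of_gt ht))
  have hev : ∀ᶠ t in nhdsWithin 0 (Set.Ioi 0), 0 < slope g' 0 t :=
    hslope.eventually (eventually_gt_nhds h)
  obtain ⟨u, hu, hIoo⟩ := mem_nhdsGT_iff_exists_Ioo_subset.1 hev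
  have hu0 : (0:ℝ) < u := hu
  have hpos : ∀ t ∈ Set.Ioo (0:ℝ) u, 0 < g' t := by
    intro t ht
    have h1 : 0 < g' t / t := by simpa [slope_def_field, h0] using hIoo ht
    have htpos := ht.1
    have h2 := mul_pos h1 htpos
    rwa [div_mul_cancel₀ _ htpos.ne'] at h2
  have hmono : StrictMonoOn g (Set.Icc 0 u) := by
    apply strictMonoOn_of_deriv_pos (convex_Icc 0 u)
      (fun t _ => (hg t).continuousAt.continuousWithinAt)
    intro t ht
    rw [interior_Icc] at ht
    rw [(hg t).deriv]
    exact hpos t ht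
  have : g 0 < g (u/2) := hmono (Set.left_mem_Icc.2 hu0.le)
    (Set.mem_Icc.2 ⟨by positivity, by linarith⟩) (by positivity)
  exact absurd (hmax (u/2)) (not_le.2 this)

lemma contDiff_dir {Φ : RR2 → RR3} (hΦ : ContDiff ℝ (⊤:ℕ∞) Φ) (e : RR2) :
    ContDiff ℝ (⊤:ℕ∞) (fun y => fderiv ℝ Φ y e) :=
  (hΦ.fderiv_right (by exact_mod_cast le_top)).clm_apply contDiff_const

/-- First-order condition at a global maximum of `x ↦ ⟪Φ x, Φ x⟫`. -/
lemma firstorder_inner {Φ : RR2 → RR3} (hΦ : ContDiff ℝ (⊤:ℕ∞) Φ) (x₀ : RR2)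
    (hmax : ∀ x, ⟪Φ x, Φ x⟫ ≤ ⟪Φ x₀, Φ x₀⟫) (e : RR2) :
    ⟪Φ x₀, fderiv ℝ Φ x₀ e⟫ = 0 := by
  set W : RR2 → RR3 := fun y => fderiv ℝ Φ y e with hWdef
  have hd : Differentiable ℝ Φ := hΦ.differentiable (by simp)
  set γ : ℝ → RR2 := fun τ => x₀ + τ • e with hγdef
  have hγ : ∀ τ, HasDerivAt γ e τ := by
    intro τ
    simpa [hγdef] using ((hasDerivAt_id τ).smul_const e).const_add x₀
  have hΦγ : ∀ τ, HasDerivAt (fun τ => Φ (γ τ)) (W (γ τ)) τ := fun τ =>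
    (hd (γ τ)).hasFDerivAt.comp_hasDerivAt τ (hγ τ)
  set g : ℝ → ℝ := fun τ => ⟪Φ (γ τ), Φ (γ τ)⟫ with hgdef
  have hg0 : HasDerivAt g (⟪Φ (γ 0), W (γ 0)⟫ + ⟪W (γ 0), Φ (γ 0)⟫) 0 :=
    (hΦγ 0).inner ℝ (hΦγ 0)
  have hγ0 : γ 0 = x₀ := by simp [hγdef]
  have hlmax : IsLocalMax g 0 := Filter.Eventually.of_forall fun τ => by
    simp only [hgdef, hγ0]; exact hmax (γ τ)
  have hder := hlmax.deriv_eq_zero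
  rw [hg0.deriv] at hder
  rw [hγ0] at hder
  have hcomm := real_inner_comm (W x₀) (Φ x₀)
  linarith [hder, hcomm]

/-- Second-order condition at a global maximum of `x ↦ ⟪Φ x, Φ x⟫`. -/
lemma hessian_ineq {Φ : RR2 → RR3} (hΦ : ContDiff ℝ (⊤:ℕ∞) Φ) (x₀ : RR2)
    (hmax : ∀ x, ⟪Φ x, Φ x⟫ ≤ ⟪Φ x₀, Φ x₀⟫) (e : RR2) :
    ⟪fderiv ℝ Φ x₀ e, fderiv ℝ Φ x₀ e⟫
      + ⟪Φ x₀, fderiv ℝ (fun y => fderiv ℝ Φ y e) x₀ e⟫ ≤ 0 := by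
  set W : RR2 → RR3 := fun y => fderiv ℝ Φ y e with hWdef
  have hWc : ContDiff ℝ (⊤:ℕ∞) W := contDiff_dir hΦ e
  have hd : Differentiable ℝ Φ := hΦ.differentiable (by simp)
  have hWd : Differentiable ℝ W := hWc.differentiable (by simp)
  set γ : ℝ → RR2 := fun τ => x₀ + τ • e with hγdef
  have hγ : ∀ τ, HasDerivAt γ e τ := by
    intro τ
    simpa [hγdef] using ((hasDerivAt_id τ).smul_const e).const_add x₀
  have hΦγ : ∀ τ, HasDerivAt (fun τ => Φ (γ τ)) (W (γ τ)) τ := fun τ =>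
    (hd (γ τ)).hasFDerivAt.comp_hasDerivAt τ (hγ τ)
  have hWγ : ∀ τ, HasDerivAt (fun τ => W (γ τ)) (fderiv ℝ W (γ τ) e) τ := fun τ =>
    (hWd (γ τ)).hasFDerivAt.comp_hasDerivAt τ (hγ τ)
  set g : ℝ → ℝ := fun τ => ⟪Φ (γ τ), Φ (γ τ)⟫ with hgdef
  set g' : ℝ → ℝ := fun τ => 2 * ⟪Φ (γ τ), W (γ τ)⟫ with hg'def
  have hg : ∀ τ, HasDerivAt g (g' τ) τ := by
    intro τ
    have h := (hΦγ τ).inner ℝ (hΦγ τ)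
    refine h.congr_deriv ?_
    simp only [hg'def]
    rw [real_inner_comm (W (γ τ)) (Φ (γ τ))]
    ring
  have hg'0 : HasDerivAt g'
      (2 * (⟪W (γ 0), W (γ 0)⟫ + ⟪Φ (γ 0), fderiv ℝ W (γ 0) e⟫)) 0 := by
    have h := ((hΦγ 0).inner ℝ (hWγ 0)).const_mul 2
    refine h.congr_deriv ?_
    ring
  have hγ0 : γ 0 = x₀ := by simp [hγdef]
  rw [hγ0] at hg'0
  have hmax' : ∀ τ, g τ ≤ g 0 := by
    intro τ
    simp only [hgdef, hγ0]
    exact hmax (γ τ)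
  have := secondDeriv_nonpos_of_max hg hg'0 hmax'
  linarith

lemma fderiv_split (F : RR2 → RR3) (x : RR2) (s t : ℝ) :
    fderiv ℝ F x (s, t) = s • d1 F x + t • d2 F x := by
  have h : ((s, t) : RR2) = s • ((1:ℝ), (0:ℝ)) + t • ((0:ℝ), (1:ℝ)) := by
    simp [Prod.ext_iff]
  rw [h, map_add, _root_.map_smul, _root_.map_smul]
  rfl

lemma d_symm {Φ : RR2 → RR3} (hΦ : ContDiff ℝ (⊤:ℕ∞) Φ) (x₀ : RR2) :
    d1 (d2 Φ) x₀ = d2 (d1 Φ) x₀ := by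
  have hdiff : DifferentiableAt ℝ (fderiv ℝ Φ) x₀ :=
    ((hΦ.fderiv_right (m := (⊤:ℕ∞)) (by exact_mod_cast le_top)).differentiable
      (by simp)).differentiableAt
  have hsymm : IsSymmSndFDerivAt ℝ Φ x₀ :=
    hΦ.contDiffAt.isSymmSndFDerivAt (by rw [minSmoothness_of_isRCLikeNormedField]; exact WithTop.coe_le_coe.2 le_top)
  have h1 : d1 (d2 Φ) x₀ = fderiv ℝ (fderiv ℝ Φ) x₀ (1, 0) (0, 1) := by
    show fderiv ℝ (fun y => fderiv ℝ Φ y ((0:ℝ), (1:ℝ))) x₀ (1, 0) = _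
    rw [fderiv_clm_apply hdiff (differentiableAt_const _)]
    simp
  have h2 : d2 (d1 Φ) x₀ = fderiv ℝ (fderiv ℝ Φ) x₀ (0, 1) (1, 0) := by
    show fderiv ℝ (fun y => fderiv ℝ Φ y ((1:ℝ), (0:ℝ))) x₀ (0, 1) = _
    rw [fderiv_clm_apply hdiff (differentiableAt_const _)]
    simp
  rw [h1, h2, hsymm.eq]

lemma hess_expand {Φ : RR2 → RR3} (hΦ : ContDiff ℝ (⊤:ℕ∞) Φ) (x₀ : RR2) (s t : ℝ) :
    fderiv ℝ (fun y => fderiv ℝ Φ y (s, t)) x₀ (s, t)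
      = (s*s) • d1 (d1 Φ) x₀ + (2*(s*t)) • d2 (d1 Φ) x₀ + (t*t) • d2 (d2 Φ) x₀ := by
  have hd1 : Differentiable ℝ (d1 Φ) :=
    (contDiff_dir hΦ (1,0)).differentiable (by simp)
  have hd2 : Differentiable ℝ (d2 Φ) :=
    (contDiff_dir hΦ (0,1)).differentiable (by simp)
  have key : HasFDerivAt (fun y => fderiv ℝ Φ y (s, t))
      (s • fderiv ℝ (d1 Φ) x₀ + t • fderiv ℝ (d2 Φ) x₀) x₀ := by
    have h : (fun y => fderiv ℝ Φ y (s, t)) = fun y => s • d1 Φ y + t • d2 Φ y := by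
      funext y
      exact fderiv_split Φ y s t
    rw [h]
    exact ((hd1 x₀).hasFDerivAt.const_smul s).add ((hd2 x₀).hasFDerivAt.const_smul t)
  rw [key.fderiv]
  have e1 : fderiv ℝ (d1 Φ) x₀ (s, t) = s • d1 (d1 Φ) x₀ + t • d2 (d1 Φ) x₀ :=
    fderiv_split (d1 Φ) x₀ s t
  have e2 : fderiv ℝ (d2 Φ) x₀ (s, t) = s • d1 (d2 Φ) x₀ + t • d2 (d2 Φ) x₀ :=
    fderiv_split (d2 Φ) x₀ s t
  simp only [ContinuousLinearMap.add_apply, ContinuousLinearMap.coe_smul', Pi.smul_apply,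
    e1, e2, d_symm hΦ x₀]
  module

lemma exists_max {v₁ v₂ : RR2} (hLI : LinearIndependent ℝ ![v₁, v₂])
    {Φ : RR2 → RR3} (hc : Continuous Φ)
    (hper : ∀ (x : RR2) (m k : ℤ), Φ (x + m • v₁ + k • v₂) = Φ x) :
    ∃ x₀ : RR2, ∀ x : RR2, ⟪Φ x, Φ x⟫ ≤ ⟪Φ x₀, Φ x₀⟫ := by
  set f : RR2 → ℝ := fun x => ⟪Φ x, Φ x⟫ with hfdef
  have hfc : Continuous f := hc.inner hc
  set K : Set RR2 := (fun st : ℝ × ℝ => st.1 • v₁ + st.2 • v₂) ''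
    (Set.Icc 0 1 ×ˢ Set.Icc 0 1) with hKdef
  have hKcomp : IsCompact K :=
    (isCompact_Icc.prod isCompact_Icc).image (by fun_prop)
  have hKne : K.Nonempty := ⟨0, ⟨(0, 0), by simp, by simp⟩⟩
  obtain ⟨x₀, hx₀K, hx₀max⟩ := hKcomp.exists_isMaxOn hKne hfc.continuousOn
  refine ⟨x₀, fun x => ?_⟩
  have hcard : Fintype.card (Fin 2) = Module.finrank ℝ RR2 := by simp
  set B := basisOfLinearIndependentOfCardEqFinrank hLI hcard with hBdef
  have hB : ∀ i, B i = ![v₁, v₂] i := fun i =>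
    congrFun (coe_basisOfLinearIndependentOfCardEqFinrank hLI hcard) i
  set a := B.repr x 0 with hadef
  set b := B.repr x 1 with hbdef
  have hxrepr : x = a • v₁ + b • v₂ := by
    have := B.sum_repr x
    rw [Fin.sum_univ_two, hB 0, hB 1] at this
    simp only [Matrix.cons_val_zero, Matrix.cons_val_one, Matrix.head_cons] at this
    exact this.symm
  set y : RR2 := Int.fract a • v₁ + Int.fract b • v₂ with hydef
  have hyK : y ∈ K := by
    refine ⟨(Int.fract a, Int.fract b), ?_, rfl⟩
    constructor
    · exact ⟨(Int.fract_nonneg a), (Int.fract_lt_one a).le⟩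
    · exact ⟨(Int.fract_nonneg b), (Int.fract_lt_one b).le⟩
  have hxy : Φ x = Φ y := by
    have h := hper y ⌊a⌋ ⌊b⌋
    have heq : y + (⌊a⌋ : ℤ) • v₁ + (⌊b⌋ : ℤ) • v₂ = x := by
      rw [hydef, hxrepr]
      have hsplit : ∀ (r : ℝ) (w : RR2), r • w = Int.fract r • w + (⌊r⌋ : ℝ) • w :=
        fun r w => by rw [← add_smul, Int.fract_add_floor]
      conv_rhs => rw [hsplit a v₁, hsplit b v₂]
      rw [Int.cast_smul_eq_zsmul ℝ ⌊a⌋ v₁, Int.cast_smul_eq_zsmul ℝ ⌊b⌋ v₂]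
      abel
    rw [heq] at h
    exact h.symm ▸ rfl
  calc f x = f y := by rw [hfdef]; simp only; rw [hxy]
    _ ≤ f x₀ := hx₀max hyK

lemma key_alg (u0 u1 u2 v0 v1 v2 p0 p1 p2 w0 w1 w2 : ℝ)
    (huv : u0*v0+u1*v1+u2*v2 = 0) (hpu : p0*u0+p1*u1+p2*u2 = 0)
    (hpv : p0*v0+p1*v1+p2*v2 = 0) :
    (u0*u0+u1*u1+u2*u2)*(v0*v0+v1*v1+v2*v2)*(p0*w0+p1*w1+p2*w2)
      = (p0*(u1*v2-u2*v1)+p1*(u2*v0-u0*v2)+p2*(u0*v1-u1*v0))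
        * ((u1*v2-u2*v1)*w0+(u2*v0-u0*v2)*w1+(u0*v1-u1*v0)*w2) := by
  linear_combination
    ((u0*v0+u1*v1+u2*v2)*(p0*w0+p1*w1+p2*w2)) * huv
    + (-(w0*((u2*v0-u0*v2)*v2-(u0*v1-u1*v0)*v1)
        + w1*((u0*v1-u1*v0)*v0-(u1*v2-u2*v1)*v2)
        + w2*((u1*v2-u2*v1)*v1-(u2*v0-u0*v2)*v0))) * hpu
    + (w0*((u2*v0-u0*v2)*u2-(u0*v1-u1*v0)*u1)
        + w1*((u0*v1-u1*v0)*u0-(u1*v2-u2*v1)*u2)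
        + w2*((u1*v2-u2*v1)*u1-(u2*v0-u0*v2)*u0)) * hpv

lemma inner3 (x y : RR3) : ⟪x, y⟫ = x 0 * y 0 + x 1 * y 1 + x 2 * y 2 := by
  simp [PiLp.inner_apply, Fin.sum_univ_three, RCLike.inner_apply]
  ring

lemma cross3_0 (a b : RR3) : cross3 a b 0 = a 1 * b 2 - a 2 * b 1 := by simp [cross3, cross_apply]
lemma cross3_1 (a b : RR3) : cross3 a b 1 = a 2 * b 0 - a 0 * b 2 := by simp [cross3, cross_apply]
lemma cross3_2 (a b : RR3) : cross3 a b 2 = a 0 * b 1 - a 1 * b 0 := by simp [cross3, cross_apply]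

lemma key_vec (u v p w : RR3) (huv : ⟪u,v⟫ = 0) (hpu : ⟪p,u⟫ = 0) (hpv : ⟪p,v⟫ = 0) :
    ⟪u,u⟫ * ⟪v,v⟫ * ⟪p,w⟫ = ⟪p, cross3 u v⟫ * ⟪cross3 u v, w⟫ := by
  simp only [inner3, cross3_0, cross3_1, cross3_2] at *
  exact key_alg _ _ _ _ _ _ _ _ _ _ _ _ huv hpu hpv

lemma lagrange (u v : RR3) :
    ⟪cross3 u v, cross3 u v⟫ = ⟪u,u⟫ * ⟪v,v⟫ - ⟪u,v⟫^2 := by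
  simp only [inner3, cross3_0, cross3_1, cross3_2]
  ring

lemma final_alg (i11 i12 i22 r q Q₁ Q₂ : ℝ) (hr : 0 < r) (hq0 : 0 ≤ q)
    (hq2 : q^2 = Q₁^2+Q₂^2) (hell : 4*r*q < 1)
    (hHx : 1/2 * r * (i11+i22) = 4*r^2*(Q₁*((i11-i22)/2) - Q₂*i12)) :
    i11*i22 - i12*i12 ≤ 0 := by
  have hS : i11 + i22 = 8*r*(Q₁*((i11-i22)/2) - Q₂*i12) := by
    have h2 : r*(i11+i22) = r*(8*r*(Q₁*((i11-i22)/2) - Q₂*i12)) := by linarith [hHx]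
    exact mul_left_cancel₀ hr.ne' h2
  set D : ℝ := Q₁*((i11-i22)/2) - Q₂*i12 with hD
  have hCS : D^2 ≤ q^2*(((i11-i22)/2)^2 + i12^2) := by
    rw [hq2, hD]
    nlinarith [sq_nonneg (Q₁*i12 + Q₂*((i11-i22)/2))]
  have hrq : (4*r*q)^2 ≤ 1 := by
    nlinarith [hell, mul_nonneg (by positivity : (0:ℝ) ≤ 4*r) hq0]
  have hs2 : (i11+i22)^2 = 64*r^2*D^2 := by rw [hS]; ring
  have hT : 0 ≤ ((i11-i22)/2)^2 + i12^2 := by positivity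
  have h1 : (i11+i22)^2 ≤ 64*r^2*(q^2*(((i11-i22)/2)^2+i12^2)) := by
    rw [hs2]
    have := mul_le_mul_of_nonneg_left hCS (by positivity : (0:ℝ) ≤ 64*r^2)
    linarith
  have h2 : 64*r^2*q^2 ≤ 4 := by nlinarith [hrq]
  have h4 := mul_le_mul_of_nonneg_right h2 hT
  have h3 : (i11+i22)^2 ≤ 4*(((i11-i22)/2)^2 + i12^2) := by nlinarith [h1, h4]
  nlinarith [h3]

set_option maxHeartbeats 1000000 in
theorem no_compact_strictly_elliptic_constrained_minimal_in_R3 :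
    ¬ ∃ (v₁ v₂ : RR2) (Φ : RR2 → RR3) (lam : RR2 → ℝ) (Q₁ Q₂ : ℝ),
      LinearIndependent ℝ ![v₁, v₂] ∧
      ContDiff ℝ (⊤ : ℕ∞) Φ ∧ ContDiff ℝ (⊤ : ℕ∞) lam ∧
      (∀ (x : RR2) (m k : ℤ), Φ (x + m • v₁ + k • v₂) = Φ x) ∧
      (∀ x : RR2, ⟪d1 Φ x, d2 Φ x⟫ = 0) ∧
      (∀ x : RR2, ‖d1 Φ x‖ = exp (lam x)) ∧
      (∀ x : RR2, ‖d2 Φ x‖ = exp (lam x)) ∧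
      (∀ x : RR2, meanCurv Φ lam x
        = 4 * exp (-(4 * lam x)) * (Q₁ * I011 Φ lam x - Q₂ * I012 Φ lam x)) ∧
      (∀ x : RR2, 4 * exp (-(2 * lam x)) * Real.sqrt (Q₁ ^ 2 + Q₂ ^ 2) < 1) := by
  rintro ⟨v₁, v₂, Φ, lam, Q₁, Q₂, hLI, hΦ, hlam, hper, horth, hn1, hn2, hH, hell⟩
  obtain ⟨x₀, hmax⟩ := exists_max hLI hΦ.continuous hper
  -- Notation at the maximum point
  set p : RR3 := Φ x₀ with hpdef
  set u : RR3 := d1 Φ x₀ with hudef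
  set v : RR3 := d2 Φ x₀ with hvdef
  set P11 : RR3 := d1 (d1 Φ) x₀ with hP11def
  set P12 : RR3 := d2 (d1 Φ) x₀ with hP12def
  set P22 : RR3 := d2 (d2 Φ) x₀ with hP22def
  set E : ℝ := exp (lam x₀) ^ 2 with hEdef
  have hE : 0 < E := by positivity
  have huu : ⟪u,u⟫ = E := by
    rw [real_inner_self_eq_norm_sq, hudef, hn1 x₀, hEdef]
  have hvv : ⟪v,v⟫ = E := by
    rw [real_inner_self_eq_norm_sq, hvdef, hn2 x₀, hEdef]
  have huv : ⟪u,v⟫ = 0 := horth x₀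
  -- First-order conditions
  have hpu : ⟪p,u⟫ = 0 := firstorder_inner hΦ x₀ hmax (1, 0)
  have hpv : ⟪p,v⟫ = 0 := firstorder_inner hΦ x₀ hmax (0, 1)
  -- Second-order conditions
  set A : ℝ := ⟪p, P11⟫ with hAdef
  set B : ℝ := ⟪p, P12⟫ with hBdef
  set C : ℝ := ⟪p, P22⟫ with hCdef
  have hsec : ∀ s t : ℝ, (s*s+t*t)*E + (s*s*A + 2*(s*t)*B + t*t*C) ≤ 0 := by
    intro s t
    have h := hessian_ineq hΦ x₀ hmax (s, t)
    rw [hess_expand hΦ x₀ s t] at h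
    rw [fderiv_split Φ x₀ s t] at h
    have e1 : ⟪(s • u + t • v : RR3), (s • u + t • v : RR3)⟫ = (s*s+t*t)*E := by
      have hvu : ⟪v,u⟫ = (0:ℝ) := by rw [real_inner_comm]; exact huv
      simp only [inner_add_left, inner_add_right, real_inner_smul_left,
        real_inner_smul_right, huu, hvv, huv, hvu]
      ring
    have e2 : ⟪p, (s*s) • P11 + (2*(s*t)) • P12 + (t*t) • P22⟫
        = s*s*A + 2*(s*t)*B + t*t*C := by
      simp only [inner_add_right, real_inner_smul_right, hAdef, hBdef, hCdef]
    rw [e1, e2] at h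
    exact h
  have hA : E + A ≤ 0 := by have := hsec 1 0; linarith
  have hC : E + C ≤ 0 := by have := hsec 0 1; linarith
  have hdisc : B^2 ≤ (E+A)*(E+C) := by
    have hq : ∀ s : ℝ, 0 ≤ (-(E+A))*(s*s) + (-(2*B))*s + (-(E+C)) := by
      intro s
      have := hsec s 1
      nlinarith [this]
    have := discrim_le_zero hq
    rw [discrim] at this
    nlinarith [this]
  have hdet : E*E ≤ A*C - B*B := by
    have h10 : E*(E+A) ≤ 0 := mul_nonpos_of_nonneg_of_nonpos hE.le hA
    have h11 : E*(E+C) ≤ 0 := mul_nonpos_of_nonneg_of_nonpos hE.le hC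
    nlinarith [hdisc, h10, h11]
  -- Geometry: Φ x₀ is parallel to the normal
  set N : RR3 := cross3 u v with hNdef
  have hpw : ∀ w : RR3, E * E * ⟪p,w⟫ = ⟪p,N⟫ * ⟪N,w⟫ := by
    intro w
    have := key_vec u v p w huv hpu hpv
    rw [huu, hvv] at this
    exact this
  set c : ℝ := ⟪p,N⟫ with hcdef
  set J11 : ℝ := ⟪N, P11⟫ with hJ11def
  set J12 : ℝ := ⟪N, P12⟫ with hJ12def
  set J22 : ℝ := ⟪N, P22⟫ with hJ22def
  have hA' : E*E*A = c*J11 := hpw P11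
  have hB' : E*E*B = c*J12 := hpw P12
  have hC' : E*E*C = c*J22 := hpw P22
  have hJpos : 0 < J11*J22 - J12*J12 := by
    have h6 : c^2 * (J11*J22 - J12*J12) = (E*E)^2 * (A*C - B*B) := by
      have : (c*J11) * (c*J22) - (c*J12)*(c*J12) = (E*E*A)*(E*E*C) - (E*E*B)*(E*E*B) := by
        rw [hA', hB', hC']
      nlinarith [this]
    have h7 : (E*E)^2 * (E*E) ≤ c^2 * (J11*J22 - J12*J12) := by
      rw [h6]
      have h8 : (0:ℝ) ≤ (E*E)^2 := sq_nonneg _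
      nlinarith [hdet, h8]
    have h9 : (0:ℝ) < c^2 * (J11*J22 - J12*J12) := lt_of_lt_of_le (by positivity) h7
    by_contra hX
    push_neg at hX
    have : c^2 * (J11*J22 - J12*J12) ≤ 0 := mul_nonpos_of_nonneg_of_nonpos (sq_nonneg c) hX
    linarith
  -- Express the second fundamental form at x₀
  set r : ℝ := exp (-(2 * lam x₀)) with hrdef
  have hr : 0 < r := by positivity
  have hI11 : I11 Φ lam x₀ = r * J11 := by
    rw [I11, gauss, real_inner_smul_left]
  have hI12 : I12 Φ lam x₀ = r * J12 := by
    rw [I12, gauss, real_inner_smul_left]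
  have hI22 : I22 Φ lam x₀ = r * J22 := by
    rw [I22, gauss, real_inner_smul_left]
  have hIpos : 0 < I11 Φ lam x₀ * I22 Φ lam x₀ - I12 Φ lam x₀ * I12 Φ lam x₀ := by
    rw [hI11, hI12, hI22]
    nlinarith [mul_pos (mul_pos hr hr) hJpos]
  have hexp4 : exp (-(4 * lam x₀)) = r^2 := by
    rw [hrdef, pow_two, ← Real.exp_add]
    congr 1
    ring
  have hq2 : (Real.sqrt (Q₁^2+Q₂^2))^2 = Q₁^2+Q₂^2 := Real.sq_sqrt (by positivity)
  have hHx := hH x₀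
  rw [meanCurv, I011, I012, hexp4] at hHx
  have hfin := final_alg (I11 Φ lam x₀) (I12 Φ lam x₀) (I22 Φ lam x₀) r
    (Real.sqrt (Q₁^2+Q₂^2)) Q₁ Q₂ hr (Real.sqrt_nonneg _) hq2 (hell x₀) hHx
  linarith [hIpos, hfin]
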